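/- Let C ⊆ 𝔤 be an invariant cone. Then {x ∈ 𝔤 : [h,x] ∈ C} = C₊ ⊕ 𝔤⁰ ⊕ C₋; i.e. the preimage of C under the linear map ad h equals the subset of elements x = x₋₁ + x₀ + x₁ (xⱼ ∈ 𝔤ʲ) with x₁ ∈ C₊ and x₋₁ ∈ C₋. -/

import Mathlib

/-- The exponential `e^{ad y}` of the endomorphism `ad y` of a topological Lie algebra,
defined by the exponential series. -/
noncomputable def expAd {L : Type*} [LieRing L] [LieAlgebra ℝ L] [TopologicalSpace L]
    (y : L) (x : L) : L :=
  ∑' n : ℕ, ((n.factorial : ℝ)⁻¹) • ((LieAlgebra.ad ℝ L y ^ n) x)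

lemma hasSum_exp_real (x : ℝ) : HasSum (fun n : ℕ => x ^ n / n.factorial) (Real.exp x) := by
  have h1 : Real.exp x = ∑' n : ℕ, x ^ n / n.factorial := by
    rw [Real.exp_eq_exp_ℝ]; exact congrFun NormedSpace.exp_eq_tsum_div x
  rw [h1]
  exact (Real.summable_pow_div_factorial x).hasSum

lemma ad_pow_eigen {L : Type*} [LieRing L] [LieAlgebra ℝ L]
    (h x : L) (r : ℝ) (hx : ⁅h, x⁆ = r • x) (t : ℝ) (n : ℕ) :
    (LieAlgebra.ad ℝ L (t • h) ^ n) x = (t * r) ^ n • x := by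
  induction n with
  | zero => simp
  | succ n ih =>
    rw [pow_succ, Module.End.mul_apply]
    have : LieAlgebra.ad ℝ L (t • h) x = (t * r) • x := by
      simp [LieAlgebra.ad_apply, smul_lie, hx, smul_smul]
    rw [this, map_smul, ih, smul_smul, ← pow_succ']

lemma expAd_eigen2 {L : Type*} [LieRing L] [LieAlgebra ℝ L]
    [TopologicalSpace L] [IsTopologicalAddGroup L] [ContinuousSMul ℝ L] [T2Space L]
    (h a c : L) (ha : ⁅h, a⁆ = (-1 : ℝ) • a) (hc : ⁅h, c⁆ = (1 : ℝ) • c) (t : ℝ) :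
    expAd (t • h) (a + c) = Real.exp (-t) • a + Real.exp t • c := by
  have hsa : HasSum (fun n : ℕ => ((-t) ^ n / n.factorial) • a) (Real.exp (-t) • a) :=
    (hasSum_exp_real (-t)).smul_const a
  have hsc : HasSum (fun n : ℕ => (t ^ n / n.factorial) • c) (Real.exp t • c) :=
    (hasSum_exp_real t).smul_const c
  have hs := hsa.add hsc
  have heq : ∀ n : ℕ, ((n.factorial : ℝ)⁻¹) • ((LieAlgebra.ad ℝ L (t • h) ^ n) (a + c)) =
      ((-t) ^ n / n.factorial) • a + (t ^ n / n.factorial) • c := by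
    intro n
    rw [map_add, ad_pow_eigen h a (-1) ha t, ad_pow_eigen h c 1 hc t]
    rw [smul_add, smul_smul, smul_smul]
    congr 2 <;> ring_nf
  exact (hs.congr_fun heq).tsum_eq

lemma limit_mem {L : Type*} [AddCommGroup L] [Module ℝ L]
    [TopologicalSpace L] [IsTopologicalAddGroup L] [ContinuousSMul ℝ L]
    {C : Set L} (hCcl : IsClosed C) (u v : L)
    (hm : ∀ t : ℝ, Real.exp (-(2 * t)) • u + v ∈ C) : v ∈ C := by
  have h0 : Filter.Tendsto (fun n : ℕ => Real.exp (-(2 * (n : ℝ)))) Filter.atTop (nhds 0) := by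
    apply Real.tendsto_exp_atBot.comp
    apply Filter.tendsto_neg_atTop_atBot.comp
    exact (tendsto_natCast_atTop_atTop).const_mul_atTop two_pos
  have htend : Filter.Tendsto (fun n : ℕ => Real.exp (-(2 * (n : ℝ))) • u + v)
      Filter.atTop (nhds v) := by
    have := (h0.smul_const u).add_const v
    rwa [zero_smul, zero_add] at this
  exact hCcl.mem_of_tendsto htend (Filter.Eventually.of_forall fun n => hm n)

theorem statement1 {L : Type*} [LieRing L] [LieAlgebra ℝ L]
    [TopologicalSpace L] [IsTopologicalAddGroup L] [ContinuousSMul ℝ L] [T2Space L]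
    [FiniteDimensional ℝ L]
    (h : L)
    (hgrad : ∀ x : L, ∃ a b c : L,
      ⁅h, a⁆ = -a ∧ ⁅h, b⁆ = 0 ∧ ⁅h, c⁆ = c ∧ x = a + b + c)
    (C : Set L) (hCcl : IsClosed C) (hCcv : Convex ℝ C)
    (hCcone : ∀ r : ℝ, 0 ≤ r → ∀ x ∈ C, r • x ∈ C)
    (hCinv : ∀ y : L, expAd y '' C = C) :
    {x : L | ⁅h, x⁆ ∈ C} =
      {x : L | ∃ a b c : L, ⁅h, a⁆ = -a ∧ ⁅h, b⁆ = 0 ∧ ⁅h, c⁆ = c ∧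
        -a ∈ C ∧ c ∈ C ∧ x = a + b + c} := by
  have hCadd : ∀ u ∈ C, ∀ v ∈ C, u + v ∈ C := by
    intro u hu v hv
    have h1 := hCcv hu hv (by norm_num : (0:ℝ) ≤ 1/2) (by norm_num : (0:ℝ) ≤ 1/2) (by norm_num)
    have h2 := hCcone 2 (by norm_num) _ h1
    have h3 : (2:ℝ) • ((1/2:ℝ) • u + (1/2:ℝ) • v) = u + v := by
      rw [smul_add, smul_smul, smul_smul]; norm_num
    rwa [h3] at h2
  have hCexp : ∀ y : L, ∀ u ∈ C, expAd y u ∈ C := by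
    intro y u hu
    rw [← hCinv y]; exact Set.mem_image_of_mem _ hu
  ext x
  simp only [Set.mem_setOf_eq]
  constructor
  · intro hx
    obtain ⟨a, b, c, ha, hb, hc, hxeq⟩ := hgrad x
    have hbr : ⁅h, x⁆ = -a + c := by
      rw [hxeq, lie_add, lie_add, ha, hb, hc, add_zero]
    rw [hbr] at hx
    have ha' : ⁅h, -a⁆ = (-1 : ℝ) • (-a) := by rw [lie_neg, ha]; simp
    have hc' : ⁅h, c⁆ = (1 : ℝ) • c := by rw [hc]; simp
    have key1 : ∀ t : ℝ, Real.exp (-(2 * t)) • (-a) + c ∈ C := by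
      intro t
      have hm := hCexp (t • h) _ hx
      rw [expAd_eigen2 h (-a) c ha' hc' t] at hm
      have hm2 := hCcone (Real.exp (-t)) (Real.exp_pos _).le _ hm
      have he : Real.exp (-t) • (Real.exp (-t) • (-a) + Real.exp t • c) =
          Real.exp (-(2 * t)) • (-a) + c := by
        rw [smul_add, smul_smul, smul_smul, ← Real.exp_add, ← Real.exp_add]
        have e1 : -t + -t = -(2 * t) := by ring
        have e2 : -t + t = 0 := by ring
        rw [e1, e2, Real.exp_zero, one_smul]
      rwa [he] at hm2
    have key2 : ∀ t : ℝ, Real.exp (-(2 * t)) • c + (-a) ∈ C := by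
      intro t
      have hm := hCexp ((-t) • h) _ hx
      rw [expAd_eigen2 h (-a) c ha' hc' (-t), neg_neg] at hm
      have hm2 := hCcone (Real.exp (-t)) (Real.exp_pos _).le _ hm
      have he : Real.exp (-t) • (Real.exp t • (-a) + Real.exp (-t) • c) =
          Real.exp (-(2 * t)) • c + (-a) := by
        rw [smul_add, smul_smul, smul_smul, ← Real.exp_add, ← Real.exp_add]
        have e1 : -t + -t = -(2 * t) := by ring
        have e2 : -t + t = 0 := by ring
        rw [e1, e2, Real.exp_zero, one_smul, add_comm]
      rwa [he] at hm2
    exact ⟨a, b, c, ha, hb, hc, limit_mem hCcl c (-a) key2, limit_mem hCcl (-a) c key1, hxeq⟩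
  · rintro ⟨a, b, c, ha, hb, hc, hna, hcC, rfl⟩
    have hbr : ⁅h, a + b + c⁆ = -a + c := by
      rw [lie_add, lie_add, ha, hb, hc, add_zero]
    rw [hbr]
    exact hCadd _ hna _ hcC
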